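/- Let Q : ℂⁿ → ℝ be a real-valued homogeneous polynomial in (z, z̄) with no pluriharmonic terms, and suppose the complex Hessian of Q is positive semidefinite at every point of ℂⁿ (i.e., the model hypersurface {Im w = Q} ⊂ ℂ^{n+1} is pseudoconvex). If Q is holomorphically nondegenerate, then there is no nonzero λ = (λ₁,…,λₙ) ∈ ℝⁿ such that ∑_{j=1}^n λ_j ( z_j·∂Q/∂z_j(z) + z̄_j·∂Q/∂z̄_j(z) ) = 0 for all z ∈ ℂⁿ; that is, the model admits no real diagonal rotation. -/

import Mathlib

open MvPolynomial
open scoped ComplexOrder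

noncomputable section

/-- Evaluation at `z ∈ ℂⁿ` of a polynomial in the variables `(z, z̄)` (the `Sum.inl`
variables are the `z_j` and the `Sum.inr` variables are the `z̄_j`). -/
def evalCR {n : ℕ} (Q : MvPolynomial (Fin n ⊕ Fin n) ℂ) (z : Fin n → ℂ) : ℂ :=
  eval (Sum.elim z fun j => (starRingEnd ℂ) (z j)) Q

namespace NoRotAux

/-! ### Part 1 : a polynomial in `(z, z̄)` vanishing at all CR points is zero -/

def rePoly {σ : Type*} (p : MvPolynomial σ ℂ) : MvPolynomial σ ℝ :=
  ∑ d ∈ p.support, monomial d ((p.coeff d).re)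

def imPoly {σ : Type*} (p : MvPolynomial σ ℂ) : MvPolynomial σ ℝ :=
  ∑ d ∈ p.support, monomial d ((p.coeff d).im)

lemma coeff_rePoly {σ : Type*} (p : MvPolynomial σ ℂ) (d) :
    (rePoly p).coeff d = (p.coeff d).re := by
  classical
  rw [rePoly, coeff_sum]
  simp only [coeff_monomial]
  rw [Finset.sum_ite_eq' p.support d fun d' => (p.coeff d').re]
  by_cases h : d ∈ p.support
  · simp [h]
  · simp [h, notMem_support_iff.mp h]

lemma coeff_imPoly {σ : Type*} (p : MvPolynomial σ ℂ) (d) :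
    (imPoly p).coeff d = (p.coeff d).im := by
  classical
  rw [imPoly, coeff_sum]
  simp only [coeff_monomial]
  rw [Finset.sum_ite_eq' p.support d fun d' => (p.coeff d').im]
  by_cases h : d ∈ p.support
  · simp [h]
  · simp [h, notMem_support_iff.mp h]

lemma re_im_decomp {σ : Type*} (p : MvPolynomial σ ℂ) :
    map (algebraMap ℝ ℂ) (rePoly p) + C Complex.I * map (algebraMap ℝ ℂ) (imPoly p) = p := by
  ext d
  simp [coeff_map, coeff_C_mul, coeff_rePoly, coeff_imPoly, Complex.ext_iff]

lemma eval_map_real {σ : Type*} (t : σ → ℝ) (q : MvPolynomial σ ℝ) :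
    eval (fun i => ((t i : ℝ) : ℂ)) (map (algebraMap ℝ ℂ) q) = ((eval t q : ℝ) : ℂ) := by
  rw [eval_map]
  have := MvPolynomial.eval₂_comp_left (algebraMap ℝ ℂ) (RingHom.id ℝ) t q
  simp only [RingHom.comp_id, Function.comp_def, Complex.coe_algebraMap] at this
  rw [← this]
  rfl

lemma zero_of_real_eval {σ : Type*} (p : MvPolynomial σ ℂ)
    (h : ∀ t : σ → ℝ, eval (fun i => (t i : ℂ)) p = 0) : p = 0 := by
  have key : ∀ t : σ → ℝ, eval t (rePoly p) = 0 ∧ eval t (imPoly p) = 0 := by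
    intro t
    have h1 := h t
    rw [← re_im_decomp p] at h1
    rw [map_add, map_mul, eval_C, eval_map_real, eval_map_real] at h1
    have hre := congrArg Complex.re h1
    have him := congrArg Complex.im h1
    simp [Complex.add_re, Complex.add_im, Complex.mul_re, Complex.mul_im] at hre him
    exact ⟨hre, him⟩
  have hre : rePoly p = 0 := by
    apply MvPolynomial.funext (q := 0)
    intro x; rw [(key x).1]; simp
  have him : imPoly p = 0 := by
    apply MvPolynomial.funext (q := 0)
    intro x; rw [(key x).2]; simp
  rw [← re_im_decomp p, hre, him]
  simp

def subCR (n : ℕ) : Fin n ⊕ Fin n → MvPolynomial (Fin n ⊕ Fin n) ℂ :=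
  Sum.elim (fun j => X (.inl j) + C Complex.I * X (.inr j))
    (fun j => X (.inl j) - C Complex.I * X (.inr j))

def subCRinv (n : ℕ) : Fin n ⊕ Fin n → MvPolynomial (Fin n ⊕ Fin n) ℂ :=
  Sum.elim (fun j => C (1/2 : ℂ) * (X (.inl j) + X (.inr j)))
    (fun j => C (1/(2*Complex.I) : ℂ) * (X (.inl j) - X (.inr j)))

lemma subCR_inv {n : ℕ} (p : MvPolynomial (Fin n ⊕ Fin n) ℂ) :
    bind₁ (subCRinv n) (bind₁ (subCR n) p) = p := by
  rw [bind₁_bind₁]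
  have : (fun i => bind₁ (subCRinv n) (subCR n i)) = X := by
    funext i
    cases i with
    | inl j =>
        simp only [subCR, Sum.elim_inl, map_add, map_mul, bind₁_X_right, bind₁_C_right,
          algebraMap_eq, subCRinv, Sum.elim_inr]
        rw [show ((C Complex.I : MvPolynomial (Fin n ⊕ Fin n) ℂ) *
          (C (1/(2*Complex.I)) * (X (.inl j) - X (.inr j)))) =
          C (Complex.I * (1/(2*Complex.I))) * (X (.inl j) - X (.inr j)) by rw [map_mul]; ring]
        rw [show Complex.I * (1/(2*Complex.I)) = 1/2 by field_simp]
        have h2 : (C (1/2:ℂ) : MvPolynomial (Fin n ⊕ Fin n) ℂ) * 2 = 1 := by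
          rw [show (2 : MvPolynomial (Fin n ⊕ Fin n) ℂ) = C 2 from (map_ofNat C 2).symm, ← map_mul]
          norm_num
        linear_combination X (Sum.inl j : Fin n ⊕ Fin n) * h2
    | inr j =>
        simp only [subCR, Sum.elim_inr, map_sub, map_mul, bind₁_X_right, bind₁_C_right,
          algebraMap_eq, subCRinv, Sum.elim_inl]
        rw [show ((C Complex.I : MvPolynomial (Fin n ⊕ Fin n) ℂ) *
          (C (1/(2*Complex.I)) * (X (.inl j) - X (.inr j)))) =
          C (Complex.I * (1/(2*Complex.I))) * (X (.inl j) - X (.inr j)) by rw [map_mul]; ring]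
        rw [show Complex.I * (1/(2*Complex.I)) = 1/2 by field_simp]
        have h2 : (C (1/2:ℂ) : MvPolynomial (Fin n ⊕ Fin n) ℂ) * 2 = 1 := by
          rw [show (2 : MvPolynomial (Fin n ⊕ Fin n) ℂ) = C 2 from (map_ofNat C 2).symm, ← map_mul]
          norm_num
        linear_combination X (Sum.inr j : Fin n ⊕ Fin n) * h2
  rw [this]
  simp [bind₁_X_left]

lemma eval_bind₁' {σ τ : Type*} (x : τ → ℂ) (g : σ → MvPolynomial τ ℂ) (φ : MvPolynomial σ ℂ) :
    eval x (bind₁ g φ) = eval (fun i => eval x (g i)) φ := by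
  rw [show (eval x (bind₁ g φ)) = (eval x : MvPolynomial τ ℂ →+* ℂ) (bind₁ g φ) from rfl,
    hom_bind₁]
  apply eval₂Hom_congr _ rfl rfl
  ext r
  simp

lemma evalCR_zero {n : ℕ} (p : MvPolynomial (Fin n ⊕ Fin n) ℂ)
    (h : ∀ z : Fin n → ℂ, evalCR p z = 0) : p = 0 := by
  have hA : bind₁ (subCR n) p = 0 := by
    apply zero_of_real_eval
    intro t
    rw [eval_bind₁']
    have hz : (fun i => eval (fun i' => (t i' : ℂ)) (subCR n i))
        = Sum.elim (fun j => (t (.inl j) : ℂ) + Complex.I * t (.inr j))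
          (fun j => (starRingEnd ℂ) ((t (.inl j) : ℂ) + Complex.I * t (.inr j))) := by
      funext i
      cases i with
      | inl j => simp [subCR]
      | inr j => simp [subCR, Complex.ext_iff]
    rw [hz]
    exact h _
  have := congrArg (bind₁ (subCRinv n)) hA
  rwa [subCR_inv, map_zero] at this

/-! ### Part 2 : Euler-type coefficient identities -/

lemma euler_coeff {σ : Type*} [DecidableEq σ] (i : σ) (p : MvPolynomial σ ℂ) (d : σ →₀ ℕ) :
    coeff d (X i * pderiv i p) = (d i : ℂ) * coeff d p := by
  induction p using MvPolynomial.induction_on' with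
  | add p q hp hq => rw [map_add, mul_add, coeff_add, coeff_add, hp, hq]; ring
  | monomial u a =>
      rw [pderiv_monomial]
      by_cases hu : u i = 0
      · simp only [hu, Nat.cast_zero, mul_zero, map_zero, coeff_zero,
          MulZeroClass.mul_zero]
        rw [coeff_monomial]
        by_cases hd : u = d
        · subst hd; simp [hu]
        · simp [hd]
      · have : X i * monomial (u - Finsupp.single i 1) (a * u i) =
            monomial u (a * u i) := by
          have hind : Finsupp.single i 1 + (u - Finsupp.single i 1) = u := by
            ext j
            simp only [Finsupp.add_apply, Finsupp.single_apply, Finsupp.tsub_apply]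
            by_cases hj : i = j
            · subst hj; simp; omega
            · simp [hj]
          rw [X, monomial_mul, one_mul, hind]
        rw [this, coeff_monomial, coeff_monomial]
        by_cases hd : u = d
        · subst hd; simp; ring
        · simp [hd]

lemma euler_double {σ : Type*} [DecidableEq σ] {a b : σ} (hab : a ≠ b)
    (p : MvPolynomial σ ℂ) :
    X a * (X b * pderiv b (pderiv a p)) = X b * pderiv b (X a * pderiv a p) := by
  rw [pderiv_mul, pderiv_X_of_ne hab]
  ring

lemma euler_double_coeff {σ : Type*} [DecidableEq σ] {a b : σ} (hab : a ≠ b)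
    (p : MvPolynomial σ ℂ) (d : σ →₀ ℕ) :
    coeff d (X a * (X b * pderiv b (pderiv a p))) = (d a : ℂ) * (d b : ℂ) * coeff d p := by
  rw [euler_double hab, euler_coeff, euler_coeff]
  ring

/-! ### Part 3 : the key polynomials -/

variable {n : ℕ}

/-- `z`-weight of a monomial -/
def wtl (lam : Fin n → ℝ) (d : Fin n ⊕ Fin n →₀ ℕ) : ℝ := ∑ j, lam j * (d (Sum.inl j) : ℝ)

/-- `z̄`-weight of a monomial -/
def wtr (lam : Fin n → ℝ) (d : Fin n ⊕ Fin n →₀ ℕ) : ℝ := ∑ j, lam j * (d (Sum.inr j) : ℝ)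

def RP (lam : Fin n → ℝ) (Q : MvPolynomial (Fin n ⊕ Fin n) ℂ) : MvPolynomial (Fin n ⊕ Fin n) ℂ :=
  ∑ j, C (lam j : ℂ) * (X (Sum.inl j) * pderiv (Sum.inl j) Q
    + X (Sum.inr j) * pderiv (Sum.inr j) Q)

def TP (lam : Fin n → ℝ) (Q : MvPolynomial (Fin n ⊕ Fin n) ℂ) : MvPolynomial (Fin n ⊕ Fin n) ℂ :=
  ∑ j, ∑ k, C ((lam j : ℂ) * lam k) *
    (X (Sum.inl j) * (X (Sum.inr k) * pderiv (Sum.inr k) (pderiv (Sum.inl j) Q)))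

def PP (lam : Fin n → ℝ) (Q : MvPolynomial (Fin n ⊕ Fin n) ℂ) : MvPolynomial (Fin n ⊕ Fin n) ℂ :=
  ∑ j, C (lam j : ℂ) * (X (Sum.inl j) * pderiv (Sum.inl j) Q)

lemma coeff_RP (lam : Fin n → ℝ) (Q : MvPolynomial (Fin n ⊕ Fin n) ℂ) (d) :
    coeff d (RP lam Q) = ((wtl lam d + wtr lam d : ℝ) : ℂ) * coeff d Q := by
  classical
  rw [RP, coeff_sum]
  simp only [coeff_C_mul, coeff_add, euler_coeff]
  rw [wtl, wtr]
  push_cast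
  rw [← Finset.sum_add_distrib, Finset.sum_mul]
  congr 1
  funext j
  ring

lemma coeff_TP (lam : Fin n → ℝ) (Q : MvPolynomial (Fin n ⊕ Fin n) ℂ) (d) :
    coeff d (TP lam Q) = ((wtl lam d : ℝ) : ℂ) * ((wtr lam d : ℝ) : ℂ) * coeff d Q := by
  classical
  rw [TP, coeff_sum]
  have h1 : ∀ j : Fin n, coeff d (∑ k, C ((lam j : ℂ) * lam k) *
      (X (Sum.inl j) * (X (Sum.inr k) * pderiv (Sum.inr k) (pderiv (Sum.inl j) Q))))
      = ∑ k, ((lam j : ℂ) * lam k) * ((d (Sum.inl j) : ℂ) * ((d (Sum.inr k) : ℂ)) * coeff d Q) := by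
    intro j
    rw [coeff_sum]
    refine Finset.sum_congr rfl fun k _ => ?_
    rw [coeff_C_mul, euler_double_coeff (by simp) Q d]
  simp only [h1]
  rw [wtl, wtr]
  push_cast
  simp only [Finset.sum_mul, Finset.mul_sum]
  rw [Finset.sum_comm]
  exact Finset.sum_congr rfl fun j _ => Finset.sum_congr rfl fun k _ => by ring

lemma coeff_PP (lam : Fin n → ℝ) (Q : MvPolynomial (Fin n ⊕ Fin n) ℂ) (d) :
    coeff d (PP lam Q) = ((wtl lam d : ℝ) : ℂ) * coeff d Q := by
  classical
  rw [PP, coeff_sum]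
  simp only [coeff_C_mul, euler_coeff]
  rw [wtl]
  push_cast
  rw [Finset.sum_mul]
  exact Finset.sum_congr rfl fun j _ => by ring

lemma supp_TP (lam : Fin n → ℝ) (Q : MvPolynomial (Fin n ⊕ Fin n) ℂ) :
    (TP lam Q).support ⊆ Q.support := by
  intro d hd
  rw [mem_support_iff] at hd ⊢
  intro h
  exact hd (by rw [coeff_TP, h, mul_zero])

/-! ### Part 4 : evaluation identities -/

lemma evalCR_eq (S : MvPolynomial (Fin n ⊕ Fin n) ℂ) (w : Fin n → ℂ) :
    evalCR S w = ∑ d ∈ S.support, coeff d S *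
      ((∏ j, w j ^ d (Sum.inl j)) * ∏ j, (starRingEnd ℂ) (w j) ^ d (Sum.inr j)) := by
  rw [evalCR, eval_eq']
  refine Finset.sum_congr rfl fun d _ => ?_
  rw [Fintype.prod_sum_type]
  simp

lemma prod_pow_exp (r : Fin n → ℝ) (u : Fin n → ℂ) (e : Fin n → ℕ) :
    ∏ j, (Complex.exp ((r j : ℂ) * Complex.I) * u j) ^ e j
      = Complex.exp (((∑ j, (e j : ℝ) * r j : ℝ) : ℂ) * Complex.I) * ∏ j, u j ^ e j := by
  simp only [mul_pow]
  rw [Finset.prod_mul_distrib]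
  congr 1
  have h : ∀ j : Fin n, Complex.exp ((r j : ℂ) * Complex.I) ^ e j
      = Complex.exp ((e j : ℂ) * ((r j : ℂ) * Complex.I)) :=
    fun j => (Complex.exp_nat_mul _ _).symm
  simp only [h]
  rw [← Complex.exp_sum]
  congr 1
  push_cast
  rw [Finset.sum_mul]
  exact Finset.sum_congr rfl fun j _ => by ring

lemma evalCR_rot (lam : Fin n → ℝ) (S Q : MvPolynomial (Fin n ⊕ Fin n) ℂ)
    (hS : S.support ⊆ Q.support) (θ : ℝ) (z : Fin n → ℂ) :
    evalCR S (fun j => Complex.exp (((lam j * θ : ℝ) : ℂ) * Complex.I) * z j)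
      = ∑ d ∈ Q.support, coeff d S *
          (Complex.exp ((((wtl lam d - wtr lam d) * θ : ℝ) : ℂ) * Complex.I) *
          ((∏ j, z j ^ d (Sum.inl j)) * ∏ j, (starRingEnd ℂ) (z j) ^ d (Sum.inr j))) := by
  rw [evalCR_eq]
  rw [Finset.sum_subset hS (fun d _ hd => by rw [notMem_support_iff.mp hd, zero_mul])]
  refine Finset.sum_congr rfl fun d _ => ?_
  congr 1
  have h1 : (∏ j, (Complex.exp (((lam j * θ : ℝ) : ℂ) * Complex.I) * z j) ^ d (Sum.inl j))
      = Complex.exp (((wtl lam d * θ : ℝ) : ℂ) * Complex.I) * ∏ j, z j ^ d (Sum.inl j) := by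
    rw [prod_pow_exp (fun j => lam j * θ) z (fun j => d (Sum.inl j))]
    congr 2
    rw [wtl]
    push_cast
    simp only [Finset.sum_mul]
    exact Finset.sum_congr rfl fun j _ => by ring
  have hconj : ∀ j : Fin n, (starRingEnd ℂ) (Complex.exp (((lam j * θ : ℝ) : ℂ) * Complex.I) * z j)
      = Complex.exp (((-(lam j * θ) : ℝ) : ℂ) * Complex.I) * (starRingEnd ℂ) (z j) := by
    intro j
    rw [map_mul]
    congr 1
    rw [← Complex.exp_conj]
    congr 1
    simp [Complex.ext_iff]
  have h2 : (∏ j, (starRingEnd ℂ) (Complex.exp (((lam j * θ : ℝ) : ℂ) * Complex.I) * z j)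
        ^ d (Sum.inr j))
      = Complex.exp (((-(wtr lam d * θ) : ℝ) : ℂ) * Complex.I)
        * ∏ j, (starRingEnd ℂ) (z j) ^ d (Sum.inr j) := by
    simp only [hconj]
    rw [prod_pow_exp (fun j => -(lam j * θ)) (fun j => (starRingEnd ℂ) (z j))
      (fun j => d (Sum.inr j))]
    congr 2
    rw [wtr]
    push_cast
    simp only [Finset.sum_mul, ← Finset.sum_neg_distrib]
    exact Finset.sum_congr rfl fun j _ => by ring
  rw [h1, h2]
  rw [show ((((wtl lam d - wtr lam d) * θ : ℝ) : ℂ) * Complex.I)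
      = ((wtl lam d * θ : ℝ) : ℂ) * Complex.I + ((-(wtr lam d * θ) : ℝ) : ℂ) * Complex.I by
    push_cast; ring]
  rw [Complex.exp_add]
  ring

/-! ### Part 5 : analysis -/

lemma re_dd_eq_zero (F₀ F₁ F₂ : ℝ → ℂ) (B : ℝ)
    (h0 : ∀ θ, HasDerivAt F₀ (F₁ θ) θ) (h1 : ∀ θ, HasDerivAt F₁ (F₂ θ) θ)
    (hb : ∀ θ, ‖F₀ θ‖ ≤ B)
    (hpos : ∀ θ, 0 ≤ (F₂ θ).re) : ∀ θ, (F₂ θ).re = 0 := by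
  have hG0 : ∀ θ, HasDerivAt (fun t => (F₀ t).re) ((F₁ θ).re) θ := fun θ =>
    (Complex.reCLM.hasFDerivAt.comp_hasDerivAt θ (h0 θ))
  have hG1 : ∀ θ, HasDerivAt (fun t => (F₁ t).re) ((F₂ θ).re) θ := fun θ =>
    (Complex.reCLM.hasFDerivAt.comp_hasDerivAt θ (h1 θ))
  have hcont : Continuous (fun t => (F₀ t).re) :=
    (Differentiable.continuous (fun θ => (hG0 θ).differentiableAt))
  have hbnd : ∀ θ, |(F₀ θ).re| ≤ B := fun θ =>
    le_trans (Complex.abs_re_le_norm _) (hb θ)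
  have hBnn : (0:ℝ) ≤ B := le_trans (abs_nonneg _) (hbnd 0)
  -- G₁ is monotone
  have hmono : Monotone (fun t => (F₁ t).re) := by
    apply monotone_of_deriv_nonneg
    · exact fun θ => (hG1 θ).differentiableAt
    · intro θ
      rw [(hG1 θ).deriv]
      exact hpos θ
  -- G₁ vanishes identically
  have hG1zero : ∀ θ, (F₁ θ).re = 0 := by
    by_contra hc
    push_neg at hc
    obtain ⟨θ₀, ha⟩ := hc
    set a := (F₁ θ₀).re with haa
    have key : ∀ s : Set ℝ, s = Set.Ici θ₀ ∨ s = Set.Iic θ₀ → True := fun _ _ => trivial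
    -- linear growth estimate
    have grow : ∀ θ : ℝ, θ₀ ≤ θ ∧ 0 < a ∨ θ ≤ θ₀ ∧ a < 0 →
        (F₀ θ₀).re + a * (θ - θ₀) ≤ (F₀ θ).re := by
      rintro θ (⟨hθ, hapos⟩ | ⟨hθ, haneg⟩)
      · have hmOn : MonotoneOn (fun t => (F₀ t).re - a * t) (Set.Ici θ₀) := by
          apply monotoneOn_of_deriv_nonneg (convex_Ici θ₀)
          · apply Continuous.continuousOn
            exact hcont.sub (continuous_const.mul continuous_id)
          · intro t _
            exact ((hG0 t).sub ((hasDerivAt_id t).const_mul a)).differentiableAt.differentiableWithinAt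
          · intro t ht
            rw [interior_Ici] at ht
            have : deriv (fun t => (F₀ t).re - a * t) t = (F₁ t).re - a := by
              have := (hG0 t).sub ((hasDerivAt_id t).const_mul a)
              rw [mul_one] at this
              exact this.deriv
            rw [this, sub_nonneg]
            exact haa ▸ hmono (le_of_lt ht)
        have := hmOn (Set.self_mem_Ici) (Set.mem_Ici.mpr hθ) hθ
        simp only at this
        linarith
      · have hmOn : AntitoneOn (fun t => (F₀ t).re - a * t) (Set.Iic θ₀) := by
          apply antitoneOn_of_deriv_nonpos (convex_Iic θ₀)
          · apply Continuous.continuousOn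
            exact hcont.sub (continuous_const.mul continuous_id)
          · intro t _
            exact ((hG0 t).sub ((hasDerivAt_id t).const_mul a)).differentiableAt.differentiableWithinAt
          · intro t ht
            rw [interior_Iic] at ht
            have : deriv (fun t => (F₀ t).re - a * t) t = (F₁ t).re - a := by
              have := (hG0 t).sub ((hasDerivAt_id t).const_mul a)
              rw [mul_one] at this
              exact this.deriv
            rw [this, sub_nonpos]
            exact haa ▸ hmono (le_of_lt ht)
        have := hmOn (Set.mem_Iic.mpr hθ) (Set.self_mem_Iic) hθ
        simp only at this
        linarith
    have hav : a * ((θ₀ + (2*B+1)/a) - θ₀) = 2*B+1 := by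
      rw [add_sub_cancel_left, mul_comm, div_mul_cancel₀ _ ha]
    rcases lt_or_gt_of_ne ha with haneg | hapos
    · have hθle : θ₀ + (2*B+1)/a ≤ θ₀ := by
        have : (2*B+1)/a < 0 := div_neg_of_pos_of_neg (by linarith) haneg
        linarith
      have h2 := grow (θ₀ + (2*B+1)/a) (Or.inr ⟨hθle, haneg⟩)
      rw [hav] at h2
      have hb1 := hbnd (θ₀ + (2*B+1)/a)
      have hb2 := hbnd θ₀
      rw [abs_le] at hb1 hb2
      linarith [hb1.2, hb2.1]
    · have hθle : θ₀ ≤ θ₀ + (2*B+1)/a := by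
        have : 0 < (2*B+1)/a := div_pos (by linarith) hapos
        linarith
      have h2 := grow (θ₀ + (2*B+1)/a) (Or.inl ⟨hθle, hapos⟩)
      rw [hav] at h2
      have hb1 := hbnd (θ₀ + (2*B+1)/a)
      have hb2 := hbnd θ₀
      rw [abs_le] at hb1 hb2
      linarith [hb1.2, hb2.1]
  intro θ
  have : deriv (fun t => (F₁ t).re) θ = 0 := by
    have heq : (fun t => (F₁ t).re) = fun _ => (0:ℝ) := funext hG1zero
    rw [heq]
    simp
  rw [← (hG1 θ).deriv]
  exact this

/-! ### Part 6 : positivity from the Hessian -/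

lemma evalCR_TP_eval (lam : Fin n → ℝ) (Q : MvPolynomial (Fin n ⊕ Fin n) ℂ) (w : Fin n → ℂ) :
    evalCR (TP lam Q) w = ∑ j, ∑ k, ((lam j : ℂ) * lam k) *
      (w j * ((starRingEnd ℂ) (w k) * evalCR (pderiv (Sum.inr k) (pderiv (Sum.inl j) Q)) w)) := by
  rw [TP, evalCR, map_sum]
  refine Finset.sum_congr rfl fun j _ => ?_
  rw [map_sum]
  refine Finset.sum_congr rfl fun k _ => ?_
  rw [map_mul, eval_C, map_mul, eval_X, map_mul, eval_X]
  simp [evalCR]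

lemma evalCR_TP_nonneg (lam : Fin n → ℝ) (Q : MvPolynomial (Fin n ⊕ Fin n) ℂ)
    (hpsd : ∀ z : Fin n → ℂ,
      (Matrix.of fun i k : Fin n =>
        evalCR (pderiv (Sum.inr k) (pderiv (Sum.inl i) Q)) z).PosSemidef)
    (w : Fin n → ℂ) :
    0 ≤ evalCR (TP lam Q) w := by
  have h := (hpsd w).dotProduct_mulVec_nonneg (fun k => (lam k : ℂ) * (starRingEnd ℂ) (w k))
  have hstar : ∀ i : Fin n, star ((lam i : ℂ) * (starRingEnd ℂ) (w i)) = (lam i : ℂ) * w i := by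
    intro i
    simp [Complex.star_def, map_mul, Complex.conj_ofReal, Complex.conj_conj]
  have heq : evalCR (TP lam Q) w =
      dotProduct (star fun k => (lam k : ℂ) * (starRingEnd ℂ) (w k))
      ((Matrix.of fun i k : Fin n =>
        evalCR (pderiv (Sum.inr k) (pderiv (Sum.inl i) Q)) w).mulVec
        fun k => (lam k : ℂ) * (starRingEnd ℂ) (w k)) := by
    rw [evalCR_TP_eval]
    simp only [dotProduct, Matrix.mulVec, Matrix.of_apply, Pi.star_apply, hstar,
      Finset.mul_sum]
    refine Finset.sum_congr rfl fun j _ => Finset.sum_congr rfl fun k _ => by ring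
  rw [heq]
  exact h

end NoRotAux

open NoRotAux in
/-- a pseudoconvex holomorphically nondegenerate model, given by a real-valued
homogeneous polynomial `Q` in `(z, z̄)` with no pluriharmonic terms whose complex Hessian is
everywhere positive semidefinite, admits no nonzero real diagonal rotation. -/
theorem pseudoconvex_model_no_real_diagonal_rotation {n m : ℕ}
    (Q : MvPolynomial (Fin n ⊕ Fin n) ℂ)
    -- `Q` is real-valued
    (hreal : ∀ z : Fin n → ℂ, (evalCR Q z).im = 0)
    -- `Q` is homogeneous of degree `m` in `(z, z̄)`
    (hhom : Q.IsHomogeneous m)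
    -- `Q` has no pluriharmonic terms
    (hplh : ∀ d ∈ Q.support, (∃ j, d (Sum.inl j) ≠ 0) ∧ (∃ j, d (Sum.inr j) ≠ 0))
    -- the complex Hessian of `Q` is positive semidefinite at every point
    (hpsd : ∀ z : Fin n → ℂ,
      (Matrix.of fun i k : Fin n =>
        evalCR (pderiv (Sum.inr k) (pderiv (Sum.inl i) Q)) z).PosSemidef)
    -- `Q` is holomorphically nondegenerate
    (hnd : ∀ f : Fin n → MvPolynomial (Fin n) ℂ,
      (∀ z : Fin n → ℂ, ∑ j, eval z (f j) * evalCR (pderiv (Sum.inl j) Q) z = 0) → f = 0) :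
    ¬ ∃ lam : Fin n → ℝ, lam ≠ 0 ∧ ∀ z : Fin n → ℂ,
      ∑ j, (lam j : ℂ) * (z j * evalCR (pderiv (Sum.inl j) Q) z
        + (starRingEnd ℂ) (z j) * evalCR (pderiv (Sum.inr j) Q) z) = 0 := by
  rintro ⟨lam, hlam0, hrot⟩
  classical
  -- Step 1: the rotation hypothesis means `RP lam Q = 0`, i.e. weights sum to zero
  have hRz : ∀ z, evalCR (RP lam Q) z = 0 := by
    intro z
    have : evalCR (RP lam Q) z = ∑ j, (lam j : ℂ) * (z j * evalCR (pderiv (Sum.inl j) Q) z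
        + (starRingEnd ℂ) (z j) * evalCR (pderiv (Sum.inr j) Q) z) := by
      rw [RP, evalCR, map_sum]
      refine Finset.sum_congr rfl fun j _ => ?_
      rw [map_mul, eval_C, map_add, map_mul, map_mul, eval_X, eval_X]
      simp [evalCR]
    rw [this]
    exact hrot z
  have hRP : RP lam Q = 0 := evalCR_zero _ hRz
  have hw : ∀ d ∈ Q.support, wtr lam d = - wtl lam d := by
    intro d hd
    have h0 : coeff d (RP lam Q) = 0 := by rw [hRP]; simp
    rw [coeff_RP] at h0
    rcases mul_eq_zero.mp h0 with h | h
    · have : wtl lam d + wtr lam d = 0 := by exact_mod_cast h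
      linarith
    · exact absurd h (mem_support_iff.mp hd)
  -- Step 2: the analytic heart, `evalCR (TP lam Q) z = 0` for all z
  have hTz : ∀ z, evalCR (TP lam Q) z = 0 := by
    intro z
    set Zc : (Fin n ⊕ Fin n →₀ ℕ) → ℂ := fun d => coeff d Q *
      ((∏ j, z j ^ d (Sum.inl j)) * ∏ j, (starRingEnd ℂ) (z j) ^ d (Sum.inr j)) with hZc
    set μ : (Fin n ⊕ Fin n →₀ ℕ) → ℂ :=
      fun d => ((2 * wtl lam d : ℝ) : ℂ) * Complex.I with hμ
    set F₀ : ℝ → ℂ := fun θ => ∑ d ∈ Q.support, Zc d * Complex.exp (μ d * θ) with hF₀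
    set F₁ : ℝ → ℂ := fun θ => ∑ d ∈ Q.support, μ d * Zc d * Complex.exp (μ d * θ) with hF₁
    set F₂ : ℝ → ℂ := fun θ => ∑ d ∈ Q.support, μ d ^ 2 * Zc d * Complex.exp (μ d * θ) with hF₂
    have hd0 : ∀ θ, HasDerivAt F₀ (F₁ θ) θ := by
      intro θ
      apply HasDerivAt.fun_sum
      intro d _
      have hc : HasDerivAt (fun ζ : ℂ => Zc d * Complex.exp (μ d * ζ))
          (Complex.exp (μ d * θ) * (μ d * 1) * Zc d) (θ : ℂ) :=
        (((hasDerivAt_id (θ:ℂ)).const_mul (μ d)).cexp).const_mul (Zc d) |>.congr_deriv (by simp only [id_eq]; ring)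
      have := hc.comp_ofReal
      refine this.congr_deriv ?_
      ring
    have hd1 : ∀ θ, HasDerivAt F₁ (F₂ θ) θ := by
      intro θ
      apply HasDerivAt.fun_sum
      intro d _
      have hc : HasDerivAt (fun ζ : ℂ => μ d * Zc d * Complex.exp (μ d * ζ))
          (Complex.exp (μ d * θ) * (μ d * 1) * (μ d * Zc d)) (θ : ℂ) :=
        (((hasDerivAt_id (θ:ℂ)).const_mul (μ d)).cexp).const_mul (μ d * Zc d)
          |>.congr_deriv (by simp only [id_eq]; ring)
      have := hc.comp_ofReal
      refine this.congr_deriv ?_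
      ring
    -- boundedness of F₀
    have hb : ∀ θ, ‖F₀ θ‖ ≤ ∑ d ∈ Q.support, ‖Zc d‖ := by
      intro θ
      refine le_trans (norm_sum_le _ _) (le_of_eq (Finset.sum_congr rfl fun d _ => ?_))
      rw [norm_mul, Complex.norm_exp]
      have : (μ d * θ).re = 0 := by
        rw [hμ]
        simp [Complex.mul_re, Complex.mul_im]
      rw [this]
      simp
    -- the second derivative is `4 · evalCR TP` along the rotated points
    have hEθ : ∀ θ : ℝ, F₂ θ = 4 * evalCR (TP lam Q)
        (fun j => Complex.exp (((lam j * θ : ℝ) : ℂ) * Complex.I) * z j) := by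
      intro θ
      rw [evalCR_rot lam _ Q (supp_TP lam Q) θ z, Finset.mul_sum]
      refine Finset.sum_congr rfl fun d hd => ?_
      rw [coeff_TP, hw d hd]
      have harg : (((wtl lam d - - wtl lam d) * θ : ℝ) : ℂ) * Complex.I = μ d * θ := by
        rw [hμ]; push_cast; ring
      rw [harg, hZc, hμ]
      have hI : ((((2 * wtl lam d : ℝ)) : ℂ) * Complex.I) ^ 2
          = - (((2 * wtl lam d : ℝ) : ℂ)) ^ 2 := by
        rw [mul_pow, Complex.I_sq]; ring
      rw [hI]
      push_cast
      ring
    -- positivity of the second derivative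
    have hpos : ∀ θ, 0 ≤ (F₂ θ).re := by
      intro θ
      rw [hEθ θ]
      have hnn := evalCR_TP_nonneg lam Q hpsd
        (fun j => Complex.exp (((lam j * θ : ℝ) : ℂ) * Complex.I) * z j)
      rw [Complex.le_def] at hnn
      have h4 : ((4:ℂ) * evalCR (TP lam Q)
          (fun j => Complex.exp (((lam j * θ : ℝ) : ℂ) * Complex.I) * z j)).re
          = 4 * (evalCR (TP lam Q)
          (fun j => Complex.exp (((lam j * θ : ℝ) : ℂ) * Complex.I) * z j)).re := by
        simp [Complex.mul_re]
      rw [h4]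
      have := hnn.1
      rw [Complex.zero_re] at this
      linarith
    -- conclude via the convexity lemma
    have hzero := re_dd_eq_zero F₀ F₁ F₂ _ hd0 hd1 hb hpos 0
    rw [hEθ 0] at hzero
    have hrot0 : (fun j => Complex.exp (((lam j * (0:ℝ) : ℝ) : ℂ) * Complex.I) * z j) = z := by
      funext j; simp
    rw [hrot0] at hzero
    have hnn := evalCR_TP_nonneg lam Q hpsd z
    rw [Complex.le_def] at hnn
    have hre : (evalCR (TP lam Q) z).re = 0 := by
      have h4 : ((4:ℂ) * evalCR (TP lam Q) z).re = 4 * (evalCR (TP lam Q) z).re := by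
        simp [Complex.mul_re]
      rw [h4] at hzero
      linarith
    have him := hnn.2
    simp at him
    exact Complex.ext (by simp [hre]) (by simp [← him])
  -- Step 3: `TP = 0`, hence all `z`-weights vanish on the support
  have hTP0 : TP lam Q = 0 := evalCR_zero _ hTz
  have hwl : ∀ d ∈ Q.support, wtl lam d = 0 := by
    intro d hd
    have h0 : coeff d (TP lam Q) = 0 := by rw [hTP0]; simp
    rw [coeff_TP, hw d hd] at h0
    rcases mul_eq_zero.mp h0 with h | h
    · rcases mul_eq_zero.mp h with h' | h'
      · exact_mod_cast h'
      · have : -wtl lam d = 0 := by exact_mod_cast h'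
        linarith
    · exact absurd h (mem_support_iff.mp hd)
  -- Step 4: `PP = 0`
  have hPP : PP lam Q = 0 := by
    ext d
    rw [coeff_PP]
    by_cases hd : d ∈ Q.support
    · rw [hwl d hd]; simp
    · rw [notMem_support_iff.mp hd]; simp
  -- Step 5: holomorphic nondegeneracy kills `lam`
  have hf := hnd (fun j => C ((lam j : ℂ)) * X j) ?_
  · apply hlam0
    funext j
    have hj := congrFun hf j
    have := congrArg (eval (fun _ => (1:ℂ))) hj
    simp at this
    exact_mod_cast this
  · intro z
    have : ∑ j, eval z (C ((lam j : ℂ)) * X j) * evalCR (pderiv (Sum.inl j) Q) z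
        = evalCR (PP lam Q) z := by
      rw [PP, evalCR, map_sum]
      refine Finset.sum_congr rfl fun j _ => ?_
      rw [map_mul, eval_C, eval_X, map_mul, eval_C, map_mul, eval_X]
      simp [evalCR]
      ring
    rw [this, hPP]
    simp [evalCR]
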